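/- Let n = mk, 0 < p₁ < 1 < p₂, ε ∈ (0,1) with ε·m a positive integer. Then the number of integer vectors r = (r₀,…,r_m) with r₀ = 0 < r₁ < … < r_m = n such that card{i : kp₁ ≤ r_i − r_{i−1} ≤ kp₂} ≥ (1−ε)m is at most ( (⌊(p₂−p₁)k⌋ + 1) · (ek/ε)^ε · exp(H_e(ε)) )^m. -/

import Mathlib

open MeasureTheory ProbabilityTheory Filter

noncomputable section

/-- Length of a longest common subsequence of two finite strings over an alphabet. -/
def lcsLen {α : Type*} (x y : List α) : ℕ :=
  sSup {L | ∃ z : List α, z.length = L ∧ z.Sublist x ∧ z.Sublist y}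

/-- The substring consisting of the letters `f_{a+1} … f_b` (1-based), i.e. the list
`[f a, f (a+1), …, f (b-1)]` (0-based), of a random sequence `f`. -/
def seg {Ω α : Type*} (f : ℕ → Ω → α) (a b : ℕ) (ω : Ω) : List α :=
  (List.range (b - a)).map fun j => f (a + j) ω

/-- Deterministic version of `seg`. -/
def segd {α : Type*} (f : ℕ → α) (a b : ℕ) : List α :=
  (List.range (b - a)).map fun j => f (a + j)

/-- `LCₙ` : the length of the LCS of `X₁ … Xₙ` and `Y₁ … Yₙ`. -/
def LC {Ω α : Type*} (X Y : ℕ → Ω → α) (n : ℕ) (ω : Ω) : ℕ :=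
  lcsLen (seg X 0 n ω) (seg Y 0 n ω)

/-- Deterministic version of `LC`. -/
def LCd {α : Type*} (x y : ℕ → α) (n : ℕ) : ℕ :=
  lcsLen (segd x 0 n) (segd y 0 n)

/-- `Lₙ(r)` : the best score of an alignment aligning `X_{k(i-1)+1} … X_{ki}` with
`Y_{r_{i-1}+1} … Y_{r_i}` for `i = 1, …, m`. -/
def Lr {Ω α : Type*} (X Y : ℕ → Ω → α) (k m : ℕ) (r : ℕ → ℕ) (ω : Ω) : ℕ :=
  ∑ i ∈ Finset.range m,
    lcsLen (seg X (k * i) (k * (i + 1)) ω) (seg Y (r i) (r (i + 1)) ω)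

/-- Deterministic version of `Lr`. -/
def Lrd {α : Type*} (x y : ℕ → α) (k m : ℕ) (r : ℕ → ℕ) : ℕ :=
  ∑ i ∈ Finset.range m,
    lcsLen (segd x (k * i) (k * (i + 1))) (segd y (r i) (r (i + 1)))

/-- `r` encodes an integer cut vector `r₀ = 0 < r₁ < … < r_m = n`. -/
def CutVec (n m : ℕ) (r : ℕ → ℕ) : Prop :=
  r 0 = 0 ∧ r m = n ∧ ∀ i < m, r i < r (i + 1)

/-- The number of indices `i ∈ {0, …, m-1}` (0-based version of `i ∈ {1, …, m}`) such that
`k p₁ ≤ r_{i+1} - r_i ≤ k p₂`. -/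
def goodCount (k m : ℕ) (p₁ p₂ : ℝ) (r : ℕ → ℕ) : ℕ :=
  Set.ncard {i : ℕ | i < m ∧ (k : ℝ) * p₁ ≤ (r (i + 1) : ℝ) - (r i : ℝ) ∧
    (r (i + 1) : ℝ) - (r i : ℝ) ≤ (k : ℝ) * p₂}

/-- The event `Aⁿ_{ε,p₁,p₂}` : every cut vector realizing the LCS as a sum of block scores has
at least `(1-ε) m` block lengths in `[k p₁, k p₂]`. -/
def eventA {Ω α : Type*} (X Y : ℕ → Ω → α) (n m k : ℕ) (ε p₁ p₂ : ℝ) : Set Ω :=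
  {ω | ∀ r : ℕ → ℕ, CutVec n m r → Lr X Y k m r ω = LC X Y n ω →
    (1 - ε) * (m : ℝ) ≤ (goodCount k m p₁ p₂ r : ℝ)}

/-- `(L, I, J)` describes an optimal alignment of `X₁ … Xₙ` with `Y₁ … Yₙ`: the points
`(I l, J l)` for `l < L` are the (1-based) index pairs of aligned matching letters. -/
def IsOptAlign {Ω α : Type*} (X Y : ℕ → Ω → α) (n : ℕ) (ω : Ω) (L : ℕ) (I J : ℕ → ℕ) : Prop :=
  L = LC X Y n ω ∧
  (∀ l < L, 1 ≤ I l ∧ I l ≤ n ∧ 1 ≤ J l ∧ J l ≤ n) ∧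
  (∀ l, l + 1 < L → I l < I (l + 1) ∧ J l < J (l + 1)) ∧
  (∀ l < L, X (I l - 1) ω = Y (J l - 1) ω)

/-- Deterministic version of `IsOptAlign`. -/
def IsOptAlignD {α : Type*} (x y : ℕ → α) (n : ℕ) (L : ℕ) (I J : ℕ → ℕ) : Prop :=
  L = LCd x y n ∧
  (∀ l < L, 1 ≤ I l ∧ I l ≤ n ∧ 1 ≤ J l ∧ J l ≤ n) ∧
  (∀ l, l + 1 < L → I l < I (l + 1) ∧ J l < J (l + 1)) ∧
  (∀ l < L, x (I l - 1) = y (J l - 1))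

/-- The event `Dⁿ_{ε,p₁,p₂}` : every point of every optimal alignment lies above the line
`y = p₁ x - p₁ n ε - p₁ k` and below the line `y = (1/p₁) x + (1/p₁) n ε + (1/p₁) k`. -/
def eventD {Ω α : Type*} (X Y : ℕ → Ω → α) (n k : ℕ) (ε p₁ : ℝ) : Set Ω :=
  {ω | ∀ L I J, IsOptAlign X Y n ω L I J → ∀ l < L,
    p₁ * (I l : ℝ) - p₁ * (n : ℝ) * ε - p₁ * (k : ℝ) ≤ (J l : ℝ) ∧
    (J l : ℝ) ≤ (1 / p₁) * (I l : ℝ) + (1 / p₁) * (n : ℝ) * ε + (1 / p₁) * (k : ℝ)}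

/-- The natural-base entropy function. -/
def He (x : ℝ) : ℝ := -x * Real.log x - (1 - x) * Real.log (1 - x)

/-- The event `Bⁿ_Pp(ε)` : for every optimal cut vector, at least `(1-ε) m` of the `m` aligned
string pairs satisfy the property `Pp`. -/
def eventB {Ω α : Type*} (X Y : ℕ → Ω → α) (n m k : ℕ)
    (Pp : List α → List α → Prop) (ε : ℝ) : Set Ω :=
  {ω | ∀ r : ℕ → ℕ, CutVec n m r → Lr X Y k m r ω = LC X Y n ω →
    (1 - ε) * (m : ℝ) ≤
      (Set.ncard {i : ℕ | i < m ∧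
        Pp (seg X (k * i) (k * (i + 1)) ω) (seg Y (r i) (r (i + 1)) ω)} : ℝ)}

/-- For a fixed cut vector `r`, the set of indices `i` whose block length `r_{i+1} - r_i` lies in
`[k p₁, k p₂]` but whose aligned string pair does not satisfy the property `Pp`. -/
def badIdx {Ω α : Type*} (X Y : ℕ → Ω → α) (k m : ℕ) (p₁ p₂ : ℝ)
    (Pp : List α → List α → Prop) (r : ℕ → ℕ) (ω : Ω) : Set ℕ :=
  {i | i < m ∧ ((k : ℝ) * p₁ ≤ (r (i + 1) : ℝ) - (r i : ℝ) ∧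
      (r (i + 1) : ℝ) - (r i : ℝ) ≤ (k : ℝ) * p₂) ∧
    ¬ Pp (seg X (k * i) (k * (i + 1)) ω) (seg Y (r i) (r (i + 1)) ω)}

/-- `X` and `Y` are independent sequences of i.i.d. `μ`-distributed letters (the whole family
`X₁, X₂, …, Y₁, Y₂, …` is independent, each letter with law `μ`). -/
def IID {Ω α : Type*} [MeasurableSpace Ω] [MeasurableSpace α]
    (P : Measure Ω) (X Y : ℕ → Ω → α) (μ : Measure α) : Prop :=
  (∀ i : ℕ ⊕ ℕ, Measurable (Sum.elim X Y i)) ∧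
  iIndepFun (Sum.elim X Y) P ∧
  (∀ i : ℕ ⊕ ℕ, P.map (Sum.elim X Y i) = μ)

private lemma choose_le_exp_entropy (m j : ℕ) (ε : ℝ) (hε0 : 0 < ε) (hε1 : ε < 1)
    (hjm : (j : ℝ) = ε * m) :
    (m.choose j : ℝ) ≤ Real.exp ((-ε * Real.log ε - (1 - ε) * Real.log (1 - ε)) * m) := by
  have hm0 : (0:ℝ) ≤ m := Nat.cast_nonneg m
  have hjle : j ≤ m := by
    have : (j : ℝ) ≤ (m : ℝ) := by nlinarith
    exact_mod_cast this
  have hmj : ((m - j : ℕ) : ℝ) = (1 - ε) * m := by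
    rw [Nat.cast_sub hjle]; nlinarith
  have key : (m.choose j : ℝ) * (ε ^ j * (1 - ε) ^ (m - j)) ≤ 1 := by
    have hbin := add_pow ε (1 - ε) m
    have h1 : ε + (1 - ε) = 1 := by ring
    rw [h1, one_pow] at hbin
    have hnn : ∀ x ∈ Finset.range (m+1), (0:ℝ) ≤ ε ^ x * (1 - ε) ^ (m - x) * (m.choose x : ℝ) := by
      intro x _
      have : (0:ℝ) < 1 - ε := by linarith
      positivity
    calc (m.choose j : ℝ) * (ε ^ j * (1 - ε) ^ (m - j))
        = ε ^ j * (1 - ε) ^ (m - j) * (m.choose j : ℝ) := by ring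
      _ ≤ ∑ i ∈ Finset.range (m + 1), ε ^ i * (1 - ε) ^ (m - i) * (m.choose i : ℝ) :=
          Finset.single_le_sum hnn (Finset.mem_range.mpr (Nat.lt_succ_of_le hjle))
      _ = 1 := hbin.symm
  have hval : ε ^ j * (1 - ε) ^ (m - j) =
      Real.exp (-((-ε * Real.log ε - (1 - ε) * Real.log (1 - ε)) * m)) := by
    have h1 : ε ^ j = Real.exp ((j : ℝ) * Real.log ε) := by
      rw [← Real.exp_log hε0, ← Real.exp_nat_mul]
      rw [Real.exp_log hε0]
    have h2 : (1 - ε) ^ (m - j) = Real.exp (((m - j : ℕ) : ℝ) * Real.log (1 - ε)) := by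
      rw [← Real.exp_log (by linarith : (0:ℝ) < 1 - ε), ← Real.exp_nat_mul]
      rw [Real.exp_log (by linarith : (0:ℝ) < 1 - ε)]
    rw [h1, h2, ← Real.exp_add]
    congr 1
    rw [hmj, hjm]; ring
  rw [hval] at key
  have hpos : (0:ℝ) < Real.exp ((-ε * Real.log ε - (1 - ε) * Real.log (1 - ε)) * m) :=
    Real.exp_pos _
  calc (m.choose j : ℝ)
      = (m.choose j : ℝ) * Real.exp (-((-ε * Real.log ε - (1 - ε) * Real.log (1 - ε)) * m)) *
        Real.exp ((-ε * Real.log ε - (1 - ε) * Real.log (1 - ε)) * m) := by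
        rw [mul_assoc, ← Real.exp_add]; simp
    _ ≤ 1 * Real.exp ((-ε * Real.log ε - (1 - ε) * Real.log (1 - ε)) * m) := by
        exact mul_le_mul_of_nonneg_right key hpos.le
    _ = _ := one_mul _

private lemma choose_le_pow_exp (n j : ℕ) (hj : 0 < j) :
    (n.choose j : ℝ) ≤ (Real.exp 1 * n / j) ^ j := by
  have hjR : (0:ℝ) < j := by exact_mod_cast hj
  have hfact : (0:ℝ) < (j.factorial : ℝ) := by exact_mod_cast Nat.factorial_pos j
  have h1 : (j.factorial : ℝ) * (n.choose j : ℝ) ≤ (n : ℝ) ^ j := by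
    have := Nat.descFactorial_le_pow n j
    rw [Nat.descFactorial_eq_factorial_mul_choose] at this
    exact_mod_cast this
  have h2 : ((j : ℝ)) ^ j / (j.factorial : ℝ) ≤ Real.exp j :=
    Real.pow_div_factorial_le_exp (j:ℝ) (le_of_lt hjR) j
  have hexpj : Real.exp (j : ℝ) = Real.exp 1 ^ j := by
    rw [← Real.exp_nat_mul]; norm_num
  have h3 : (n.choose j : ℝ) ≤ (n : ℝ) ^ j / (j.factorial : ℝ) := by
    rw [le_div_iff₀ hfact]; linarith [h1]
  refine h3.trans ?_
  have hrw : (Real.exp 1 * n / j) ^ j = Real.exp 1 ^ j * ((n:ℝ) ^ j / (j:ℝ) ^ j) := by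
    rw [div_pow, mul_pow]; ring
  have hjj : (0:ℝ) < (j:ℝ)^j := by positivity
  rw [hrw, ← hexpj, div_le_iff₀ hfact]
  have hmul : (j:ℝ)^j ≤ Real.exp (j:ℝ) * (j.factorial : ℝ) := by
    have := (div_le_iff₀ hfact).mp h2
    linarith
  calc (n:ℝ)^j = (n:ℝ)^j/(j:ℝ)^j * (j:ℝ)^j := (div_mul_cancel₀ _ hjj.ne').symm
    _ ≤ (n:ℝ)^j/(j:ℝ)^j * (Real.exp (j:ℝ) * (j.factorial : ℝ)) :=
        mul_le_mul_of_nonneg_left hmul (by positivity)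
    _ = Real.exp (j:ℝ) * ((n:ℝ)^j/(j:ℝ)^j) * (j.factorial : ℝ) := by ring

private lemma numeric_bound (n m k j N : ℕ) (hm : 1 ≤ m) (hk : 1 ≤ k) (hn : n = m * k)
    (p₁ p₂ ε : ℝ) (hp₁0 : 0 < p₁) (hp₁1 : p₁ < 1) (hp₂ : 1 < p₂)
    (hε0 : 0 < ε) (hε1 : ε < 1) (hj : 0 < j) (hjm : (j : ℝ) = ε * (m : ℝ))
    (hN : N ≤ m.choose j *
      ((⌊(k:ℝ) * p₂⌋₊ + 1 - ⌈(k:ℝ) * p₁⌉₊) ^ m * n.choose j)) :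
    (N : ℝ) ≤ (((⌊(p₂ - p₁) * (k : ℝ)⌋₊ : ℝ) + 1) * (Real.exp 1 * (k : ℝ) / ε) ^ ε *
      Real.exp (He ε)) ^ m := by
  have hkR : (0:ℝ) < k := by exact_mod_cast hk
  have hmR : (0:ℝ) < m := by exact_mod_cast hm
  have hab : ⌈(k:ℝ) * p₁⌉₊ ≤ ⌊(k:ℝ) * p₂⌋₊ :=
    calc ⌈(k:ℝ) * p₁⌉₊ ≤ k := Nat.ceil_le.mpr (by nlinarith)
      _ ≤ ⌊(k:ℝ) * p₂⌋₊ := Nat.le_floor (by nlinarith)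
  have hc0 : (0:ℝ) ≤ Real.exp 1 * (k:ℝ) / ε := by positivity
  have hKb : ((⌊(k:ℝ) * p₂⌋₊ + 1 - ⌈(k:ℝ) * p₁⌉₊ : ℕ) : ℝ) ≤
      (⌊(p₂ - p₁) * (k:ℝ)⌋₊ : ℝ) + 1 := by
    have h1 : ⌊(k:ℝ) * p₂⌋₊ - ⌈(k:ℝ) * p₁⌉₊ ≤ ⌊(p₂ - p₁) * (k:ℝ)⌋₊ := by
      apply Nat.le_floor
      rw [Nat.cast_sub hab]
      have hbf : ((⌊(k:ℝ) * p₂⌋₊ : ℕ) : ℝ) ≤ (k:ℝ) * p₂ := Nat.floor_le (by positivity)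
      have haf : (k:ℝ) * p₁ ≤ ((⌈(k:ℝ) * p₁⌉₊ : ℕ) : ℝ) := Nat.le_ceil _
      nlinarith
    have h2 : ⌊(k:ℝ) * p₂⌋₊ + 1 - ⌈(k:ℝ) * p₁⌉₊ ≤ ⌊(p₂ - p₁) * (k:ℝ)⌋₊ + 1 := by omega
    calc ((⌊(k:ℝ) * p₂⌋₊ + 1 - ⌈(k:ℝ) * p₁⌉₊ : ℕ) : ℝ)
        ≤ ((⌊(p₂ - p₁) * (k:ℝ)⌋₊ + 1 : ℕ) : ℝ) := by exact_mod_cast h2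
      _ = (⌊(p₂ - p₁) * (k:ℝ)⌋₊ : ℝ) + 1 := by push_cast; ring
  have hCnj : (n.choose j : ℝ) ≤ ((Real.exp 1 * (k:ℝ) / ε) ^ ε) ^ m := by
    have h1 := choose_le_pow_exp n j hj
    have hnR : (n:ℝ) = (m:ℝ) * k := by rw [hn]; push_cast; ring
    have hε' : ε ≠ 0 := ne_of_gt hε0
    have hm' : (m:ℝ) ≠ 0 := ne_of_gt hmR
    have hj' : (j:ℝ) ≠ 0 := by rw [hjm]; positivity
    have heq : Real.exp 1 * (n:ℝ) / (j:ℝ) = Real.exp 1 * (k:ℝ) / ε := by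
      rw [hnR, hjm]
      field_simp
    have h2 : (Real.exp 1 * (k:ℝ) / ε) ^ (j:ℕ) = ((Real.exp 1 * (k:ℝ) / ε) ^ ε) ^ m := by
      rw [← Real.rpow_natCast (Real.exp 1 * (k:ℝ) / ε) j, hjm, Real.rpow_mul hc0,
        Real.rpow_natCast]
    rw [← h2, ← heq]
    exact h1
  have hCmj : (m.choose j : ℝ) ≤ Real.exp (He ε) ^ m := by
    have h1 := choose_le_exp_entropy m j ε hε0 hε1 hjm
    rw [← Real.exp_nat_mul]
    have h3 : (m:ℝ) * He ε = (-ε * Real.log ε - (1 - ε) * Real.log (1 - ε)) * m := by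
      simp only [He]; ring
    rw [h3]
    exact h1
  calc (N : ℝ)
      ≤ ((m.choose j * ((⌊(k:ℝ) * p₂⌋₊ + 1 - ⌈(k:ℝ) * p₁⌉₊) ^ m * n.choose j) : ℕ) : ℝ) := by
        exact_mod_cast hN
    _ = (m.choose j : ℝ) * ((⌊(k:ℝ) * p₂⌋₊ + 1 - ⌈(k:ℝ) * p₁⌉₊ : ℕ) : ℝ) ^ m *
        (n.choose j : ℝ) := by push_cast; ring
    _ ≤ Real.exp (He ε) ^ m * ((⌊(p₂ - p₁) * (k:ℝ)⌋₊ : ℝ) + 1) ^ m *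
        ((Real.exp 1 * (k:ℝ) / ε) ^ ε) ^ m := by
        apply mul_le_mul _ hCnj (by positivity) (by positivity)
        exact mul_le_mul hCmj (pow_le_pow_left₀ (by positivity) hKb m)
          (by positivity) (by positivity)
    _ = (((⌊(p₂ - p₁) * (k : ℝ)⌋₊ : ℝ) + 1) * (Real.exp 1 * (k:ℝ) / ε) ^ ε *
        Real.exp (He ε)) ^ m := by
        rw [mul_pow, mul_pow]; ring

set_option maxHeartbeats 1200000 in
/-- improved counting bound (goodboundR) of the paper. -/
theorem card_R_le
    (n m k : ℕ) (hm : 1 ≤ m) (hk : 1 ≤ k) (hn : n = m * k)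
    (p₁ p₂ ε : ℝ) (hp₁0 : 0 < p₁) (hp₁1 : p₁ < 1) (hp₂ : 1 < p₂)
    (hε0 : 0 < ε) (hε1 : ε < 1)
    (j : ℕ) (hj : 0 < j) (hjm : (j : ℝ) = ε * (m : ℝ)) :
    (Set.ncard {r : Fin (m + 1) → ℕ | r 0 = 0 ∧ r (Fin.last m) = n ∧ StrictMono r ∧
        (1 - ε) * (m : ℝ) ≤
          (Set.ncard {i : Fin m | (k : ℝ) * p₁ ≤ (r i.succ : ℝ) - (r i.castSucc : ℝ) ∧
            (r i.succ : ℝ) - (r i.castSucc : ℝ) ≤ (k : ℝ) * p₂} : ℝ)} : ℝ) ≤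
      (((⌊(p₂ - p₁) * (k : ℝ)⌋₊ : ℝ) + 1) * (Real.exp 1 * (k : ℝ) / ε) ^ ε *
        Real.exp (He ε)) ^ m := by
  classical
  have hkR : (0:ℝ) < k := by exact_mod_cast hk
  have hmR : (0:ℝ) < m := by exact_mod_cast hm
  set a := ⌈(k : ℝ) * p₁⌉₊ with ha
  set b := ⌊(k : ℝ) * p₂⌋₊ with hb
  have hak : a ≤ k := Nat.ceil_le.mpr (by nlinarith)
  have hkb : k ≤ b := Nat.le_floor (by nlinarith)
  have hab : a ≤ b := hak.trans hkb
  have hjmle : j ≤ m := by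
    have h1 : (j:ℝ) ≤ m := by nlinarith
    exact_mod_cast h1
  set P : (Fin (m+1) → ℕ) → Fin m → Prop := fun r i =>
    (k : ℝ) * p₁ ≤ (r i.succ : ℝ) - (r i.castSucc : ℝ) ∧
      (r i.succ : ℝ) - (r i.castSucc : ℝ) ≤ (k : ℝ) * p₂ with hP
  set bad : (Fin (m+1) → ℕ) → Finset (Fin m) :=
    fun r => Finset.univ.filter (fun i => ¬ P r i) with hbad
  set S : (Fin (m+1) → ℕ) → Finset (Fin m) := fun r =>
    if h : ∃ u : Finset (Fin m), bad r ⊆ u ∧ u.card = j then h.choose else ∅ with hSdef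
  set Φ : (Fin (m+1) → ℕ) → Finset (Fin m) × (Fin m → ℕ) × Finset ℕ := fun r =>
    (S r, fun i => if i ∈ S r then a else r i.succ - r i.castSucc,
      (S r).image fun i => r i.succ) with hΦ
  set A : Finset (Finset (Fin m) × (Fin m → ℕ) × Finset ℕ) :=
    (Finset.univ : Finset (Fin m)).powersetCard j ×ˢ
      (Fintype.piFinset fun _ : Fin m => Finset.Icc a b) ×ˢ
      (Finset.Icc 1 n).powersetCard j with hA
  have hSspec : ∀ r : Fin (m+1) → ℕ, (1 - ε) * (m : ℝ) ≤
      (Set.ncard {i : Fin m | P r i} : ℝ) → bad r ⊆ S r ∧ (S r).card = j := by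
    intro r hcount
    have hset : {i : Fin m | P r i} = ↑(Finset.univ.filter (P r)) := by ext i; simp
    rw [hset, Set.ncard_coe_finset] at hcount
    have hsum : (Finset.univ.filter (P r)).card + (bad r).card = m := by
      rw [hbad]
      simpa using Finset.card_filter_add_card_filter_not
        (s := (Finset.univ : Finset (Fin m))) (p := P r)
    have hbc : (bad r).card ≤ j := by
      have h2 : ((Finset.univ.filter (P r)).card : ℝ) + ((bad r).card : ℝ) = m := by
        exact_mod_cast hsum
      have h1 : ((bad r).card : ℝ) ≤ j := by nlinarith
      exact_mod_cast h1
    have hex : ∃ u : Finset (Fin m), bad r ⊆ u ∧ u.card = j := by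
      obtain ⟨u, h1, _, h3⟩ := Finset.exists_subsuperset_card_eq
        (Finset.subset_univ (bad r)) hbc (by simpa using hjmle)
      exact ⟨u, h1, h3⟩
    have : S r = hex.choose := by rw [hSdef]; simp only [dif_pos hex]
    rw [this]
    exact hex.choose_spec
  have hgood : ∀ r : Fin (m+1) → ℕ, bad r ⊆ S r → ∀ i : Fin m, i ∉ S r → P r i := by
    intro r hbs i hi
    by_contra hnp
    exact hi (hbs (by simp [hbad, hnp]))
  have hkeymin : ∀ (rr : Fin (m+1) → ℕ), StrictMono rr → ∀ u : Finset (Fin m), ∀ i0 : Fin m,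
      ∀ x ∈ u.image (fun i' => rr i'.succ), rr i0.castSucc < x → rr i0.succ ≤ x := by
    intro rr hsm u i0 x hx hlt
    obtain ⟨i', _, rfl⟩ := Finset.mem_image.mp hx
    rcases lt_or_ge i' i0 with h | h
    · have h2 : rr i'.succ ≤ rr i0.castSucc := hsm.monotone (Fin.succ_le_castSucc_iff.mpr h)
      omega
    · exact hsm.monotone (Fin.succ_le_succ_iff.mpr h)
  have hmain : (Set.ncard {r : Fin (m + 1) → ℕ | r 0 = 0 ∧ r (Fin.last m) = n ∧ StrictMono r ∧
      (1 - ε) * (m : ℝ) ≤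
        (Set.ncard {i : Fin m | (k : ℝ) * p₁ ≤ (r i.succ : ℝ) - (r i.castSucc : ℝ) ∧
          (r i.succ : ℝ) - (r i.castSucc : ℝ) ≤ (k : ℝ) * p₂} : ℝ)}) ≤ A.card := by
    rw [← Set.ncard_coe_finset A]
    apply Set.ncard_le_ncard_of_injOn Φ
    · -- maps into A
      rintro r ⟨h0, hlast, hsm, hcount⟩
      obtain ⟨hbs, hcard⟩ := hSspec r hcount
      rw [hA]
      refine Finset.mem_product.mpr ⟨?_, Finset.mem_product.mpr ⟨?_, ?_⟩⟩
      · exact Finset.mem_powersetCard.mpr ⟨Finset.subset_univ _, hcard⟩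
      · show (fun i => if i ∈ S r then a else r i.succ - r i.castSucc) ∈ _
        rw [Fintype.mem_piFinset]
        intro i
        rw [Finset.mem_Icc]
        by_cases hi : i ∈ S r
        · simp [hi, hab]
        · simp only [if_neg hi]
          obtain ⟨hg1, hg2⟩ := hgood r hbs i hi
          have hlt : r i.castSucc < r i.succ := hsm (Fin.castSucc_lt_succ (i := i))
          have hcast : ((r i.succ - r i.castSucc : ℕ) : ℝ) =
              (r i.succ : ℝ) - (r i.castSucc : ℝ) := by
            rw [Nat.cast_sub hlt.le]
          constructor
          · exact Nat.ceil_le.mpr (by rw [hcast]; exact hg1)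
          · exact Nat.le_floor (by rw [hcast]; exact hg2)
      · show (S r).image (fun i => r i.succ) ∈ _
        rw [Finset.mem_powersetCard]
        constructor
        · intro x hx
          obtain ⟨i, _, rfl⟩ := Finset.mem_image.mp hx
          rw [Finset.mem_Icc]
          constructor
          · have h1 : r 0 < r i.succ := hsm (Fin.succ_pos i)
            omega
          · have h1 : r i.succ ≤ r (Fin.last m) := hsm.monotone (Fin.le_last _)
            omega
        · rw [Finset.card_image_of_injOn, hcard]
          intro i1 _ i2 _ he
          exact Fin.succ_injective _ (hsm.injective he)
    · -- injective on the set
      rintro r ⟨h0, hlast, hsm, hcount⟩ r' ⟨h0', hlast', hsm', hcount'⟩ heq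
      obtain ⟨hbs, hcard⟩ := hSspec r hcount
      obtain ⟨hbs', hcard'⟩ := hSspec r' hcount'
      rw [hΦ] at heq
      simp only [Prod.mk.injEq] at heq
      obtain ⟨hS, hd, hT⟩ := heq
      funext t
      induction t using Fin.induction with
      | zero => rw [h0, h0']
      | succ i ih =>
        by_cases hi : i ∈ S r
        · have hi' : i ∈ S r' := hS ▸ hi
          apply le_antisymm
          · apply hkeymin r hsm (S r) i (r' i.succ)
            · rw [hT]; exact Finset.mem_image_of_mem _ hi'
            · rw [ih]; exact hsm' (Fin.castSucc_lt_succ (i := i))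
          · apply hkeymin r' hsm' (S r') i (r i.succ)
            · rw [← hT]; exact Finset.mem_image_of_mem _ hi
            · rw [← ih]; exact hsm (Fin.castSucc_lt_succ (i := i))
        · have hi' : i ∉ S r' := hS ▸ hi
          have hdi := congrFun hd i
          simp only [if_neg hi, if_neg hi'] at hdi
          have l1 : r i.castSucc < r i.succ := hsm (Fin.castSucc_lt_succ (i := i))
          have l2 : r' i.castSucc < r' i.succ := hsm' (Fin.castSucc_lt_succ (i := i))
          omega
  have hAcard : A.card = m.choose j * ((b + 1 - a) ^ m * n.choose j) := by
    rw [hA, Finset.card_product, Finset.card_product, Finset.card_powersetCard,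
      Finset.card_powersetCard, Fintype.card_piFinset]
    simp [Nat.card_Icc]
  rw [hAcard] at hmain
  exact numeric_bound n m k j _ hm hk hn p₁ p₂ ε hp₁0 hp₁1 hp₂ hε0 hε1 hj hjm hmain

end
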